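/- Let n ≥ 2, a ∈ ℝ and let u be a Schwartz function on ℝⁿ. Then for every ξ = (ξ', ξ_n) ∈ ℝ^{n-1} × ℝ, 𝓕(Δ_a u)(ξ) = |ξ|² ∂²(𝓕u)/∂ξ_n²(ξ) − (a−4) ξ_n ∂(𝓕u)/∂ξ_n(ξ) + (2−a) 𝓕u(ξ). -/

import Mathlib

open MeasureTheory

/-- Directional derivative: `pd v u x = (fderiv ℝ u x) v`. -/
noncomputable def pd {E F : Type*} [NormedAddCommGroup E] [NormedSpace ℝ E]
    [NormedAddCommGroup F] [NormedSpace ℝ F] (v : E) (u : E → F) (x : E) : F :=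
  fderiv ℝ u x v

/-- The operator `Δ_a u = x_n² Δu + a x_n ∂u/∂x_n` on `ℝⁿ = ℝ^{m} × ℝ` (complex valued). -/
noncomputable def deltaA (m : ℕ) (a : ℝ) (u : (Fin m → ℝ) × ℝ → ℂ)
    (x : (Fin m → ℝ) × ℝ) : ℂ :=
  ((x.2 ^ 2 : ℝ) : ℂ) *
      ((∑ j, pd (Pi.single j 1, (0 : ℝ)) (pd (Pi.single j 1, (0 : ℝ)) u) x)
        + pd ((0 : Fin m → ℝ), (1 : ℝ)) (pd ((0 : Fin m → ℝ), (1 : ℝ)) u) x)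
    + ((a * x.2 : ℝ) : ℂ) * pd ((0 : Fin m → ℝ), (1 : ℝ)) u x

/-- The Fourier transform `𝓕u(ξ) = (2π)^{-n/2} ∫ e^{-i x·ξ} u(x) dx` on `ℝⁿ = ℝ^{n-1} × ℝ`. -/
noncomputable def ft (n : ℕ) (u : (Fin (n - 1) → ℝ) × ℝ → ℂ)
    (ξ : (Fin (n - 1) → ℝ) × ℝ) : ℂ :=
  (((2 * Real.pi) ^ (-((n : ℝ) / 2)) : ℝ) : ℂ) *
    ∫ x : (Fin (n - 1) → ℝ) × ℝ,
      Complex.exp (-Complex.I * (((∑ j, x.1 j * ξ.1 j) + x.2 * ξ.2 : ℝ) : ℂ)) * u x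

/-! ### Auxiliary setup -/

open SchwartzMap Real Complex VectorFourier ContinuousLinearMap
open scoped FourierTransform

namespace Statement3Aux

variable {m : ℕ}

abbrev Vm (m : ℕ) := (Fin m → ℝ) × ℝ

noncomputable def Lm (m : ℕ) : Vm m →L[ℝ] Vm m →L[ℝ] ℝ :=
  LinearMap.toContinuousLinearMap
    ((LinearMap.toContinuousLinearMap (𝕜 := ℝ) (E := Vm m) (F' := ℝ)).toLinearMap ∘ₗ
      (LinearMap.mk₂ ℝ (fun x ξ : Vm m => (∑ j, x.1 j * ξ.1 j) + x.2 * ξ.2)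
        (by intro x y z; simp [add_mul, Finset.sum_add_distrib]; ring)
        (by intro c x y; simp [Finset.mul_sum, mul_assoc, mul_add])
        (by intro x y z; simp [mul_add, Finset.sum_add_distrib]; ring)
        (by intro c x y; simp [Finset.mul_sum, mul_add]; congr 1
            exact Finset.sum_congr rfl (fun j _ => by ring); ring)))

@[simp] lemma Lm_apply (x ξ : Vm m) : Lm m x ξ = (∑ j, x.1 j * ξ.1 j) + x.2 * ξ.2 := by
  simp [Lm]

noncomputable def P (v : Vm m) : 𝓢(Vm m, ℂ) →L[ℝ] 𝓢(Vm m, ℂ) := SchwartzMap.evalCLM ℝ (Vm m) ℂ v ∘L fderivCLM ℝ (Vm m) ℂ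

lemma pd_coe (v : Vm m) (f : 𝓢(Vm m, ℂ)) : pd v ⇑f = ⇑(P v f) := rfl

lemma htg (m : ℕ) : Function.HasTemperateGrowth (fun x : Vm m => ((x.2 : ℝ) : ℂ)) :=
  (Complex.ofRealCLM.comp (ContinuousLinearMap.snd ℝ (Fin m → ℝ) ℝ)).hasTemperateGrowth

noncomputable def mulX (m : ℕ) : 𝓢(Vm m, ℂ) →L[ℝ] 𝓢(Vm m, ℂ) :=
  bilinLeftCLM (ContinuousLinearMap.mul ℝ ℂ) (htg m)

@[simp] lemma mulX_apply (f : 𝓢(Vm m, ℂ)) (x : Vm m) :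
    mulX m f x = f x * ((x.2 : ℝ) : ℂ) := rfl

lemma P_mulX (v : Vm m) (f : 𝓢(Vm m, ℂ)) :
    P v (mulX m f) = mulX m (P v f) + (v.2 : ℝ) • f := by
  ext x
  have h1 : HasFDerivAt (fun y : Vm m => f y * ((y.2:ℝ):ℂ))
      (f x • (Complex.ofRealCLM.comp (ContinuousLinearMap.snd ℝ (Fin m → ℝ) ℝ))
        + ((x.2:ℝ):ℂ) • fderiv ℝ f x) x :=
    (f.differentiableAt.hasFDerivAt).mul
      ((Complex.ofRealCLM.comp (ContinuousLinearMap.snd ℝ (Fin m → ℝ) ℝ)).hasFDerivAt)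
  have h2 : pd v (⇑(mulX m f)) x = (f x • (Complex.ofRealCLM.comp
      (ContinuousLinearMap.snd ℝ (Fin m → ℝ) ℝ)) + ((x.2:ℝ):ℂ) • fderiv ℝ f x) v := by
    rw [pd, show (⇑((mulX m) f)) = (fun y : Vm m => f y * ((y.2:ℝ):ℂ)) from rfl, h1.fderiv]
  rw [← pd_coe]
  simp only [h2, ContinuousLinearMap.add_apply, ContinuousLinearMap.smul_apply,
    ContinuousLinearMap.coe_comp', Function.comp_apply, ContinuousLinearMap.coe_snd',
    Complex.ofRealCLM_apply, SchwartzMap.add_apply, SchwartzMap.smul_apply, mulX_apply]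
  simp only [← pd_coe, pd, smul_eq_mul, Complex.real_smul]
  ring

noncomputable def en (m : ℕ) : Vm m := ((0 : Fin m → ℝ), (1 : ℝ))
noncomputable def ej (j : Fin m) : Vm m := (Pi.single j 1, (0 : ℝ))

noncomputable def bigS (m : ℕ) (a : ℝ) (u : 𝓢(Vm m, ℂ)) : 𝓢(Vm m, ℂ) :=
  (∑ j, P (ej j) (P (ej j) (mulX m (mulX m u))))
    + P (en m) (P (en m) (mulX m (mulX m u)))
    + (a - 4 : ℝ) • P (en m) (mulX m u) + (2 - a : ℝ) • u

lemma deltaA_eq (a : ℝ) (u : 𝓢(Vm m, ℂ)) : deltaA m a ⇑u = ⇑(bigS m a u) := by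
  funext x
  have hv : ∀ v : Vm m, P v (P v (mulX m (mulX m u))) x
      = (P v (P v u)) x * ((x.2:ℂ))^2 + 4 * v.2 * x.2 * (P v u) x + 2 * (v.2:ℂ)^2 * u x := by
    intro v
    simp only [P_mulX, map_add, _root_.map_smul, SchwartzMap.add_apply, SchwartzMap.smul_apply,
      mulX_apply, smul_eq_mul, Complex.real_smul]
    push_cast
    ring
  have hvj : ∀ j : Fin m, P ((Pi.single j 1 : Fin m → ℝ), (0:ℝ))
        (P ((Pi.single j 1 : Fin m → ℝ), (0:ℝ)) (mulX m (mulX m u))) x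
      = (x.2:ℂ)^2 * (P ((Pi.single j 1 : Fin m → ℝ), (0:ℝ))
        (P ((Pi.single j 1 : Fin m → ℝ), (0:ℝ)) u)) x := by
    intro j
    rw [hv]
    norm_num
    ring
  have hve : P ((0 : Fin m → ℝ), (1:ℝ)) (P ((0 : Fin m → ℝ), (1:ℝ)) (mulX m (mulX m u))) x
      = (x.2:ℂ)^2 * (P ((0 : Fin m → ℝ), (1:ℝ)) (P ((0 : Fin m → ℝ), (1:ℝ)) u)) x
        + 4 * x.2 * (P ((0 : Fin m → ℝ), (1:ℝ)) u) x + 2 * u x := by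
    rw [hv]
    norm_num
    ring
  have hv1 : P ((0 : Fin m → ℝ), (1:ℝ)) (mulX m u) x
      = (P ((0 : Fin m → ℝ), (1:ℝ)) u) x * (x.2:ℂ) + u x := by
    simp only [P_mulX, SchwartzMap.add_apply, SchwartzMap.smul_apply, mulX_apply,
      Complex.real_smul]
    push_cast
    ring
  have hsum : ∀ g : Fin m → 𝓢(Vm m, ℂ), (∑ j, g j) x = ∑ j, g j x := by
    intro g
    rw [← coe_coeHom, map_sum]
    simp
  simp only [deltaA, pd_coe, bigS, ej, en, SchwartzMap.add_apply, SchwartzMap.smul_apply, hsum,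
    hvj, hve, hv1, Complex.real_smul]
  rw [← Finset.mul_sum]
  push_cast
  ring

/-! ### Fourier side -/

instance (m : ℕ) : Measure.IsAddHaarMeasure (volume : Measure (Vm m)) :=
  inferInstanceAs (Measure.IsAddHaarMeasure ((volume : Measure (Fin m → ℝ)).prod volume))

noncomputable def FI {E : Type*} [NormedAddCommGroup E] [NormedSpace ℂ E] (m : ℕ)
    (f : Vm m → E) : Vm m → E :=
  VectorFourier.fourierIntegral Real.fourierChar volume (Lm m).toLinearMap₁₂ f

lemma hLc (m : ℕ) : Continuous fun p : Vm m × Vm m => (Lm m).toLinearMap₁₂ p.1 p.2 :=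
  (Lm m).continuous₂

lemma f_int1 (f : 𝓢(Vm m, ℂ)) : Integrable (fun x : Vm m => ‖x‖ * ‖f x‖) volume := by
  simpa using f.integrable_pow_mul volume 1

lemma fderiv_coe (f : 𝓢(Vm m, ℂ)) : fderiv ℝ ⇑f = ⇑(fderivCLM ℝ (Vm m) ℂ f) := rfl

lemma FI_fderiv (f : 𝓢(Vm m, ℂ)) :
    FI m (fderiv ℝ ⇑f) = fourierSMulRight (-(Lm m).flip) (FI m ⇑f) :=
  VectorFourier.fourierIntegral_fderiv (Lm m) f.integrable f.differentiable
    (by rw [fderiv_coe]; exact (fderivCLM ℝ (Vm m) ℂ f).integrable)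

lemma FI_P (v : Vm m) (f : 𝓢(Vm m, ℂ)) (w : Vm m) :
    FI m ⇑(P v f) w = (2 * π * I * (Lm m v w)) * FI m ⇑f w := by
  have h0 : ⇑(P v f) = fun x => fderiv ℝ (⇑f) x v := rfl
  have h1 : FI m (fun x => fderiv ℝ (⇑f) x v) w = FI m (fderiv ℝ ⇑f) w v :=
    (VectorFourier.fourierIntegral_continuousLinearMap_apply (L := Lm m)
      Real.continuous_fourierChar
      (by rw [fderiv_coe]; exact (fderivCLM ℝ (Vm m) ℂ f).integrable)).symm
  rw [h0, h1, FI_fderiv]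
  simp only [fourierSMulRight_apply, ContinuousLinearMap.neg_apply,
    ContinuousLinearMap.flip_apply, smul_eq_mul, Complex.real_smul]
  push_cast
  ring

lemma hasFDerivAt_FI (f : 𝓢(Vm m, ℂ)) (w : Vm m) :
    HasFDerivAt (FI m ⇑f) (FI m (fourierSMulRight (Lm m) ⇑f) w) w :=
  VectorFourier.hasFDerivAt_fourierIntegral (Lm m) f.integrable (f_int1 f) w

lemma integrable_fourierSMulRight (f : 𝓢(Vm m, ℂ)) :
    Integrable (fourierSMulRight (Lm m) ⇑f) volume := by
  apply (((f_int1 f).const_mul (2 * π * ‖Lm m‖)).mono'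
    (f.continuous.aestronglyMeasurable.fourierSMulRight))
  refine ae_of_all _ fun x => ?_
  calc ‖fourierSMulRight (Lm m) ⇑f x‖ ≤ 2 * π * ‖Lm m‖ * ‖x‖ * ‖f x‖ :=
        norm_fourierSMulRight_le _ _ _
    _ = 2 * π * ‖Lm m‖ * (‖x‖ * ‖f x‖) := by ring

lemma FI_smulRight_en (f : 𝓢(Vm m, ℂ)) (w : Vm m) :
    FI m (fourierSMulRight (Lm m) ⇑f) w (en m) = (-(2 * π * I)) * FI m ⇑(mulX m f) w := by
  have h1 : FI m (fourierSMulRight (Lm m) ⇑f) w (en m)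
      = FI m (fun x => fourierSMulRight (Lm m) (⇑f) x (en m)) w :=
    VectorFourier.fourierIntegral_continuousLinearMap_apply (L := Lm m)
      Real.continuous_fourierChar (integrable_fourierSMulRight f)
  have h2 : (fun x : Vm m => fourierSMulRight (Lm m) (⇑f) x (en m))
      = fun x : Vm m => (-(2*π*I)) • (mulX m f x) := by
    funext x
    simp only [fourierSMulRight_apply, en, Lm_apply, mulX_apply, smul_eq_mul,
      Complex.real_smul]
    simp only [Pi.zero_apply, mul_zero, Finset.sum_const_zero, mul_one, zero_add]
    push_cast
    ring
  rw [h1, h2]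
  unfold FI VectorFourier.fourierIntegral
  simp_rw [Circle.smul_def, smul_eq_mul, mul_left_comm _ (-(2*π*I) : ℂ)]
  rw [MeasureTheory.integral_const_mul]

lemma pd_en_scaled (f : 𝓢(Vm m, ℂ)) (k : ℂ) :
    pd (en m) (fun ξ : Vm m => k * FI m ⇑f ((2*π)⁻¹ • ξ))
      = fun ξ : Vm m => (k * (2*π)⁻¹ * (-(2*π*I))) * FI m ⇑(mulX m f) ((2*π)⁻¹ • ξ) := by
  funext ξ
  have h2 : HasFDerivAt (fun ξ' : Vm m => (2*π)⁻¹ • ξ')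
      ((2*π)⁻¹ • (ContinuousLinearMap.id ℝ (Vm m))) ξ := by
    have := ((2*π)⁻¹ • (ContinuousLinearMap.id ℝ (Vm m))).hasFDerivAt (x := ξ)
    convert this using 1
    funext x; simp
  have hD : HasFDerivAt (fun ξ' : Vm m => k * FI m ⇑f ((2*π)⁻¹ • ξ'))
      (((k : ℂ) • (FI m (fourierSMulRight (Lm m) ⇑f) ((2*π)⁻¹ • ξ))).comp
        ((2*π)⁻¹ • (ContinuousLinearMap.id ℝ (Vm m)))) ξ := by
    exact ((hasFDerivAt_FI f ((2*π)⁻¹ • ξ)).const_mul k).comp ξ h2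
  rw [pd, hD.fderiv, ContinuousLinearMap.comp_apply]
  have hN : ((2*π)⁻¹ • (ContinuousLinearMap.id ℝ (Vm m))) (en m) = (2*π)⁻¹ • (en m) := rfl
  rw [hN, ContinuousLinearMap.smul_apply,
    (FI m (fourierSMulRight (Lm m) ⇑f) ((2*π)⁻¹ • ξ)).map_smul, FI_smulRight_en]
  simp only [smul_eq_mul, Complex.real_smul]
  push_cast
  ring

lemma ft_eq (n : ℕ) (f : Vm (n-1) → ℂ) :
    ft n f = fun ξ : Vm (n-1) => (((2 * π) ^ (-((n:ℝ)/2)) : ℝ) : ℂ)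
      * FI (n-1) f ((2*π)⁻¹ • ξ) := by
  funext ξ
  unfold ft FI VectorFourier.fourierIntegral
  congr 1
  refine integral_congr_ae (Filter.Eventually.of_forall  fun x => ?_)
  have hL : ((Lm (n-1)).toLinearMap₁₂ x) ((2*π)⁻¹ • ξ)
      = (2*π)⁻¹ * ((∑ j, x.1 j * ξ.1 j) + x.2 * ξ.2) := by
    show Lm (n-1) x ((2*π)⁻¹ • ξ) = _
    rw [Lm_apply]
    simp only [Prod.smul_fst, Prod.smul_snd, Pi.smul_apply, smul_eq_mul]
    rw [mul_add, Finset.mul_sum]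
    congr 1
    · exact Finset.sum_congr rfl fun j _ => by ring
    · ring
  show Complex.exp _ * f x = _ • f x
  rw [Circle.smul_def, Real.fourierChar_apply, hL]
  congr 1
  have hne : ((2:ℂ) * (π:ℂ)) ≠ 0 := by
    simp [Real.pi_ne_zero, Complex.ofReal_ne_zero]
  push_cast
  field_simp

lemma FI_add (f g : 𝓢(Vm m, ℂ)) (w : Vm m) :
    FI m ⇑(f + g) w = FI m ⇑f w + FI m ⇑g w := by
  have h := VectorFourier.fourierIntegral_add Real.continuous_fourierChar (hLc m)
    (f.integrable (μ := volume)) (g.integrable (μ := volume))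
  have hc : ⇑(f + g) = ⇑f + ⇑g := rfl
  rw [hc]
  exact congrFun h w

lemma FI_smul (r : ℝ) (f : 𝓢(Vm m, ℂ)) (w : Vm m) :
    FI m ⇑(r • f) w = (r : ℂ) * FI m ⇑f w := by
  have hc : ⇑(r • f) = fun x => (r:ℂ) * f x := by
    funext x; simp [Complex.real_smul]
  rw [hc]
  unfold FI VectorFourier.fourierIntegral
  simp_rw [Circle.smul_def, smul_eq_mul, mul_left_comm _ (r:ℂ)]
  rw [MeasureTheory.integral_const_mul]

lemma FI_zero (w : Vm m) : FI m ⇑(0 : 𝓢(Vm m, ℂ)) w = 0 := by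
  unfold FI VectorFourier.fourierIntegral
  have : ⇑(0 : 𝓢(Vm m, ℂ)) = fun _ : Vm m => (0:ℂ) := rfl
  rw [this]
  simp

lemma FI_sum {ι : Type*} (s : Finset ι) (g : ι → 𝓢(Vm m, ℂ)) (w : Vm m) :
    FI m ⇑(∑ i ∈ s, g i) w = ∑ i ∈ s, FI m ⇑(g i) w := by
  classical
  induction s using Finset.induction_on with
  | empty => simpa using FI_zero w
  | insert x s hx ih =>
      rw [Finset.sum_insert hx, Finset.sum_insert hx, FI_add, ih]

lemma Lm_ej (j : Fin m) (w : Vm m) : Lm m (ej j) w = w.1 j := by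
  simp [ej, Lm_apply, Pi.single_apply, Finset.sum_ite_eq]

lemma Lm_en (w : Vm m) : Lm m (en m) w = w.2 := by
  simp [en, Lm_apply]

end Statement3Aux

open Statement3Aux

/-- For a Schwartz function `u` on `ℝⁿ`,
`𝓕(Δ_a u)(ξ) = |ξ|² ∂²𝓕u/∂ξ_n² − (a−4) ξ_n ∂𝓕u/∂ξ_n + (2−a) 𝓕u(ξ)`. -/
theorem statement3 (n : ℕ) (hn : 2 ≤ n) (a : ℝ)
    (u : SchwartzMap ((Fin (n - 1) → ℝ) × ℝ) ℂ) (ξ : (Fin (n - 1) → ℝ) × ℝ) :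
    ft n (deltaA (n - 1) a u) ξ
      = ((((∑ j, ξ.1 j ^ 2) + ξ.2 ^ 2 : ℝ)) : ℂ) *
          pd ((0 : Fin (n - 1) → ℝ), (1 : ℝ)) (pd ((0 : Fin (n - 1) → ℝ), (1 : ℝ)) (ft n u)) ξ
        - (((a - 4) * ξ.2 : ℝ) : ℂ) * pd ((0 : Fin (n - 1) → ℝ), (1 : ℝ)) (ft n u) ξ
        + ((2 - a : ℝ) : ℂ) * ft n u ξ := by
  have hft : ft n ⇑u = fun ξ : Vm (n-1) =>
      (((2 * π) ^ (-((n:ℝ)/2)) : ℝ) : ℂ) * FI (n-1) ⇑u ((2*π)⁻¹ • ξ) := ft_eq n ⇑u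
  have hpd1 : pd ((0 : Fin (n-1) → ℝ), (1 : ℝ)) (ft n ⇑u)
      = fun ξ : Vm (n-1) => ((((2 * π) ^ (-((n:ℝ)/2)) : ℝ) : ℂ) * (((2*π)⁻¹ : ℝ):ℂ) * (-(2*π*I)))
        * FI (n-1) ⇑(mulX (n-1) u) ((2*π)⁻¹ • ξ) := by
    rw [hft]
    exact pd_en_scaled u _
  have hpd2 : pd ((0 : Fin (n-1) → ℝ), (1 : ℝ)) (pd ((0 : Fin (n-1) → ℝ), (1 : ℝ)) (ft n ⇑u))
      = fun ξ : Vm (n-1) => (((((2 * π) ^ (-((n:ℝ)/2)) : ℝ) : ℂ) * (((2*π)⁻¹ : ℝ):ℂ) * (-(2*π*I)))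
          * (((2*π)⁻¹ : ℝ):ℂ) * (-(2*π*I)))
        * FI (n-1) ⇑(mulX (n-1) (mulX (n-1) u)) ((2*π)⁻¹ • ξ) := by
    rw [hpd1]
    exact pd_en_scaled (mulX (n-1) u) _
  rw [deltaA_eq a u, ft_eq n ⇑(bigS (n-1) a u)]
  simp only
  rw [show (bigS (n-1) a u) = (∑ j, P (ej j) (P (ej j) (mulX (n-1) (mulX (n-1) u))))
      + P (en (n-1)) (P (en (n-1)) (mulX (n-1) (mulX (n-1) u)))
      + (a - 4 : ℝ) • P (en (n-1)) (mulX (n-1) u) + (2 - a : ℝ) • u from rfl]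
  rw [FI_add, FI_add, FI_add, FI_sum, FI_smul, FI_smul]
  simp only [FI_P, Lm_ej, Lm_en]
  rw [hpd2, hpd1, hft]
  simp only
  have hw1 : ∀ j : Fin (n-1), ((2*π)⁻¹ • ξ).1 j = (2*π)⁻¹ * ξ.1 j := fun j => rfl
  have hw2 : ((2*π)⁻¹ • ξ : Vm (n-1)).2 = (2*π)⁻¹ * ξ.2 := rfl
  simp only [hw1, hw2]
  push_cast
  have hK : ∀ r : ℂ, (2*(π:ℂ)*Complex.I*((2*(π:ℂ))⁻¹*r))
        * ((2*(π:ℂ)*Complex.I*((2*(π:ℂ))⁻¹*r))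
          * Statement3Aux.FI (n-1) (⇑((Statement3Aux.mulX (n-1)) ((Statement3Aux.mulX (n-1)) u)))
            ((2*π)⁻¹ • ξ))
      = r^2 * ((2*(π:ℂ)*Complex.I*(2*(π:ℂ))⁻¹)^2
          * Statement3Aux.FI (n-1) (⇑((Statement3Aux.mulX (n-1)) ((Statement3Aux.mulX (n-1)) u)))
            ((2*π)⁻¹ • ξ)) := fun r => by ring
  rw [Finset.sum_congr rfl (fun j _ => hK ((ξ.1 j : ℝ) : ℂ)), ← Finset.sum_mul]
  ring
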